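/- Let $a_0:\mathbb{R}\to\mathbb{R}$ be bounded with $a_0(t)\le C$ for all $t$ (some $C>0$), and suppose $t\mapsto e^{\int_0^t a_0(s)\,ds}$ is integrable on $(-\infty,0]$. Then the function $v(t)=\int_{-\infty}^t e^{-\int_s^t a_0(r)\,dr}\,ds$ is well-defined for all $t\in\mathbb{R}$, satisfies $v'(t)=-a_0(t)v(t)+1$, and $v(t)\ge 1/C$ for all $t\in\mathbb{R}$. -/

import Mathlib

open MeasureTheory Set Filter

theorem stmt0 (a0 : ℝ → ℝ) (C : ℝ) (hC : 0 < C)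
    (hcont : Continuous a0) (hbdd : ∃ M, ∀ t, |a0 t| ≤ M) (hub : ∀ t, a0 t ≤ C)
    (hint : IntegrableOn (fun t => Real.exp (∫ s in (0:ℝ)..t, a0 s)) (Iic 0)) :
    (∀ t : ℝ, IntegrableOn (fun s => Real.exp (-∫ r in s..t, a0 r)) (Iic t)) ∧
    (∀ t : ℝ, HasDerivAt (fun t => ∫ s in Iic t, Real.exp (-∫ r in s..t, a0 r))
      (-(a0 t) * (∫ s in Iic t, Real.exp (-∫ r in s..t, a0 r)) + 1) t) ∧
    (∀ t : ℝ, 1 / C ≤ ∫ s in Iic t, Real.exp (-∫ r in s..t, a0 r)) := by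
  set F : ℝ → ℝ := fun t => ∫ s in (0:ℝ)..t, a0 s with hF
  have hFd : ∀ t, HasDerivAt F (a0 t) t := fun t =>
    intervalIntegral.integral_hasDerivAt_right (hcont.intervalIntegrable _ _)
      (hcont.stronglyMeasurableAtFilter _ _) hcont.continuousAt
  have hFc : Continuous F := continuous_iff_continuousAt.2 fun t => (hFd t).continuousAt
  have hEc : Continuous fun s => Real.exp (F s) := Real.continuous_exp.comp hFc
  have hsub : ∀ s t : ℝ, (∫ r in s..t, a0 r) = F t - F s := by
    intro s t
    rw [hF]
    rw [← intervalIntegral.integral_interval_sub_left (hcont.intervalIntegrable 0 t)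
      (hcont.intervalIntegrable 0 s)]
  have hrw : ∀ t : ℝ, (fun s => Real.exp (-∫ r in s..t, a0 r))
      = fun s => Real.exp (-F t) * Real.exp (F s) := by
    intro t; funext s
    rw [hsub, ← Real.exp_add]
    ring_nf
  have hEint : ∀ t : ℝ, IntegrableOn (fun s => Real.exp (F s)) (Iic t) := by
    intro t
    have h1 : IntegrableOn (fun s => Real.exp (F s)) (Icc 0 t) :=
      hEc.continuousOn.integrableOn_Icc
    have h0 : IntegrableOn (fun s => Real.exp (F s)) (Iic 0) := hint
    refine (h0.union h1).mono_set fun s hs => ?_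
    rcases le_or_gt s 0 with h | h
    · exact Or.inl h
    · exact Or.inr ⟨h.le, hs⟩
  have hint1 : ∀ t : ℝ, IntegrableOn (fun s => Real.exp (-∫ r in s..t, a0 r)) (Iic t) := by
    intro t
    rw [hrw t]
    exact (hEint t).const_mul _
  set G : ℝ → ℝ := fun t => ∫ s in Iic t, Real.exp (F s) with hG
  have veq : ∀ t : ℝ, (∫ s in Iic t, Real.exp (-∫ r in s..t, a0 r))
      = Real.exp (-F t) * G t := by
    intro t
    rw [hrw t, hG]
    exact integral_const_mul _ _
  have hGd : ∀ t, HasDerivAt G (Real.exp (F t)) t := by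
    intro t
    have key : G = fun u => G 0 + ∫ s in (0:ℝ)..u, Real.exp (F s) := by
      funext u
      have h := intervalIntegral.integral_Iic_sub_Iic (hEint 0) (hEint u)
      rw [hG]
      simp only at h ⊢
      linarith
    rw [key]
    have hd := intervalIntegral.integral_hasDerivAt_right
      (hEc.intervalIntegrable 0 t) (hEc.stronglyMeasurableAtFilter _ _) hEc.continuousAt
    exact hd.const_add (G 0)
  have hexp1 : ∀ t : ℝ, Real.exp (-F t) * Real.exp (F t) = 1 := by
    intro t; rw [← Real.exp_add]; simp
  constructor
  · exact hint1
  constructor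
  · intro t
    have h1 : HasDerivAt (fun u => Real.exp (-F u)) (-(a0 t) * Real.exp (-F t)) t := by
      have := ((hFd t).neg).exp
      convert this using 1
      show _ = Real.exp (-F t) * -a0 t
      ring
      rfl
    have hvd := h1.mul (hGd t)
    rw [show (fun u => ∫ s in Iic u, Real.exp (-∫ r in s..u, a0 r))
        = fun u => Real.exp (-F u) * G u from funext veq, veq t]
    convert hvd using 1
    · rfl
    · rfl
    · rfl
    have := hexp1 t
    nlinarith [hexp1 t]
  · intro t
    have hEint2 : IntegrableOn (fun s => Real.exp (C * (s - t))) (Iic t) := by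
      have h := exp_neg_integrableOn_Ioi (-t) hC
      have h2 : Integrable ((Ioi (-t)).indicator fun x => Real.exp (-(C * x))) :=
        (integrable_indicator_iff measurableSet_Ioi).2 (by simpa [neg_mul] using h)
      have h3 := h2.comp_neg
      have h4 : (fun x => ((Ioi (-t)).indicator fun x => Real.exp (-(C * x))) (-x))
          = (Iio t).indicator fun s => Real.exp (C * s) := by
        funext x
        by_cases hx : x < t
        · rw [Set.indicator_of_mem (show -x ∈ Ioi (-t) by simpa using hx),
            Set.indicator_of_mem (show x ∈ Iio t from hx)]
          ring_nf
        · rw [Set.indicator_of_notMem (show -x ∉ Ioi (-t) by simpa using hx),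
            Set.indicator_of_notMem (show x ∉ Iio t from hx)]
      rw [h4] at h3
      have h5 : IntegrableOn (fun s => Real.exp (C * s)) (Iio t) :=
        (integrable_indicator_iff measurableSet_Iio).1 h3
      have h6 : IntegrableOn (fun s => Real.exp (C * s)) (Iic t) :=
        (integrableOn_Iic_iff_integrableOn_Iio (by simp)).2 h5
      have heq : (fun s => Real.exp (C * (s - t)))
          = fun s => Real.exp (-(C * t)) * Real.exp (C * s) := by
        funext s; rw [← Real.exp_add]; ring_nf
      rw [heq]
      exact h6.const_mul _
    have hval : (∫ s in Iic t, Real.exp (C * (s - t))) = 1 / C := by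
      have hderiv : ∀ x ∈ Iic t,
          HasDerivAt (fun s => C⁻¹ * Real.exp (C * (s - t))) (Real.exp (C * (x - t))) x := by
        intro x _
        have hlin : HasDerivAt (fun s : ℝ => C * (s - t)) C x := by
          have := ((hasDerivAt_id x).sub_const t).const_mul C
          simpa using this
        have := (hlin.exp).const_mul C⁻¹
        convert this using 1
        · rfl
        · rfl
        rw [mul_comm (Real.exp _) C, ← mul_assoc, inv_mul_cancel₀ hC.ne', one_mul]
      have htend : Tendsto (fun s => C⁻¹ * Real.exp (C * (s - t))) atBot (nhds 0) := by
        have h1 : Tendsto (fun s : ℝ => C * (s - t)) atBot atBot := by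
          apply Tendsto.const_mul_atBot hC
          simpa [sub_eq_add_neg] using tendsto_atBot_add_const_right atBot (-t) tendsto_id
        have := (Real.tendsto_exp_atBot.comp h1).const_mul C⁻¹
        simpa using this
      have := integral_Iic_of_hasDerivAt_of_tendsto' hderiv hEint2 htend
      rw [this]
      simp [one_div]
    have hle : (∫ s in Iic t, Real.exp (C * (s - t)))
        ≤ ∫ s in Iic t, Real.exp (-∫ r in s..t, a0 r) := by
      apply setIntegral_mono_on hEint2 (hint1 t) measurableSet_Iic
      intro s hs
      have hs' : s ≤ t := hs
      apply Real.exp_le_exp.2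
      have hmono : (∫ r in s..t, a0 r) ≤ ∫ r in s..t, C :=
        intervalIntegral.integral_mono_on hs' (hcont.intervalIntegrable _ _)
          intervalIntegrable_const fun r _ => hub r
      rw [intervalIntegral.integral_const] at hmono
      simp only [smul_eq_mul] at hmono
      linarith
    linarith [hval ▸ hle]
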